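/- arXiv:2403.09058 — 5 statements merged into one kernel-verified Lean document; each statement's English description precedes it below -/
import Mathlib

section
/- Let Nc, Lu, Lb be positive integers with Nc ≥ Lu + Lb, let t be an integer, and let a(k) (1 ≤ k ≤ Lu−1) and b(k) (1 ≤ k ≤ Lb−1) be real numbers. Then Σ_{k1=1}^{Lu−1} Σ_{k2=1, k2≠k1}^{Lu−1} Σ_{k3=1}^{Lb−1} ( Σ_{s=0}^{Nc−1} exp(−2πi·(k2−k1−k3)·(s−t)/Nc) )·a(k1)·a(k2)·b(k3) = Nc·Σ_{k1=1}^{Lu−1} Σ_{k2=k1+1}^{min(Lu, Lb+k1)−1} a(k1)·a(k2)·b(k2−k1). -/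
open Finset

lemma exp_sum_ne (Nc : ℕ) (hNc : 0 < Nc) (t d : ℤ) (hd : d ≠ 0) (hlt : d.natAbs < Nc) :
    ∑ s ∈ Finset.range Nc,
      Complex.exp (-2 * (Real.pi : ℂ) * Complex.I * (d : ℂ) * ((s : ℂ) - (t : ℂ)) / (Nc : ℂ)) = 0 := by
  have hNc' : (Nc : ℂ) ≠ 0 := Nat.cast_ne_zero.mpr hNc.ne'
  set ζ : ℂ := Complex.exp (-(2 * (Real.pi : ℂ) * Complex.I) * (d : ℂ) / Nc) with hζdef
  have hterm : ∀ s : ℕ, Complex.exp (-2 * (Real.pi:ℂ) * Complex.I * (d:ℂ) * ((s:ℂ) - t) / Nc)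
      = Complex.exp ((2 * (Real.pi:ℂ) * Complex.I) * ((d:ℂ) * t / Nc)) * ζ ^ s := by
    intro s
    rw [hζdef, ← Complex.exp_nat_mul, ← Complex.exp_add]
    congr 1
    field_simp
    ring
  rw [Finset.sum_congr rfl fun s _ => hterm s, ← Finset.mul_sum]
  have hζpow : ζ ^ Nc = 1 := by
    rw [hζdef, ← Complex.exp_nat_mul]
    have h1 : (Nc:ℂ) * (-(2 * (Real.pi:ℂ) * Complex.I) * d / Nc) = ((-d : ℤ):ℂ) * (2 * (Real.pi:ℂ) * Complex.I) := by
      push_cast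
      field_simp
    rw [h1, Complex.exp_int_mul_two_pi_mul_I]
  have hζne : ζ ≠ 1 := by
    intro h
    rw [hζdef, Complex.exp_eq_one_iff] at h
    obtain ⟨n, hn⟩ := h
    have hI : (Complex.I : ℂ) ≠ 0 := Complex.I_ne_zero
    have hπ : (Real.pi : ℂ) ≠ 0 := by exact_mod_cast Real.pi_ne_zero
    have h2 : (2 * (Real.pi:ℂ) * Complex.I) ≠ 0 := by
      simp [hπ, hI]
    have h3' : (2 * (Real.pi:ℂ) * Complex.I) * (-(d:ℂ)) = (2 * (Real.pi:ℂ) * Complex.I) * ((n:ℂ) * Nc) := by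
      field_simp at hn
      linear_combination (2 * (Real.pi:ℂ) * Complex.I) * hn
    have h3 : (d : ℂ) = ((-n * Nc : ℤ) : ℂ) := by
      have := mul_left_cancel₀ h2 h3'
      push_cast
      linear_combination -this
    have h4 : d = -n * Nc := by exact_mod_cast h3
    have hn0 : n ≠ 0 := by rintro rfl; simp at h4; omega
    have : d.natAbs = n.natAbs * Nc := by rw [h4]; simp [Int.natAbs_mul]
    have : Nc ≤ d.natAbs := by
      rw [this]
      have : 1 ≤ n.natAbs := Int.natAbs_pos.mpr hn0
      nlinarith
    omega
  rw [geom_sum_eq hζne, hζpow]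
  simp

/-- **Lemma 1, eq. (57) of the paper.**  For `Nc ≥ Lu + Lb` and any integer `t`,
`Σ_{k1=1}^{Lu−1} Σ_{k2≠k1} Σ_{k3=1}^{Lb−1} (Σ_{s=0}^{Nc−1} e^{−2πi(k2−k1−k3)(s−t)/Nc}) a(k1) a(k2) b(k3)
  = Nc · Σ_{k1=1}^{Lu−1} Σ_{k2=k1+1}^{min(Lu,Lb+k1)−1} a(k1) a(k2) b(k2−k1)`. -/
theorem dft_sum_collapse_offdiag_u
    (Nc Lu Lb : ℕ) (hNc : 0 < Nc) (hLu : 0 < Lu) (hLb : 0 < Lb)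
    (hLen : Lu + Lb ≤ Nc) (t : ℤ) (a b : ℕ → ℝ) :
    ∑ k1 ∈ Finset.Ico 1 Lu, ∑ k2 ∈ (Finset.Ico 1 Lu).erase k1, ∑ k3 ∈ Finset.Ico 1 Lb,
        (∑ s ∈ Finset.range Nc,
            Complex.exp (-2 * (Real.pi : ℂ) * Complex.I *
              ((k2 : ℂ) - (k1 : ℂ) - (k3 : ℂ)) * ((s : ℂ) - (t : ℂ)) / (Nc : ℂ))) *
          (a k1 : ℂ) * (a k2 : ℂ) * (b k3 : ℂ) =
      (Nc : ℂ) * ∑ k1 ∈ Finset.Ico 1 Lu, ∑ k2 ∈ Finset.Ico (k1 + 1) (min Lu (Lb + k1)),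
        (a k1 : ℂ) * (a k2 : ℂ) * (b (k2 - k1) : ℂ) := by
  have key : ∀ k1 ∈ Finset.Ico 1 Lu, ∀ k2 ∈ (Finset.Ico 1 Lu).erase k1,
      (∑ k3 ∈ Finset.Ico 1 Lb,
        (∑ s ∈ Finset.range Nc,
            Complex.exp (-2 * (Real.pi : ℂ) * Complex.I *
              ((k2 : ℂ) - (k1 : ℂ) - (k3 : ℂ)) * ((s : ℂ) - (t : ℂ)) / (Nc : ℂ))) *
          (a k1 : ℂ) * (a k2 : ℂ) * (b k3 : ℂ)) =
      if k2 ∈ Finset.Ico (k1 + 1) (min Lu (Lb + k1)) then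
        (Nc : ℂ) * ((a k1 : ℂ) * (a k2 : ℂ) * (b (k2 - k1) : ℂ)) else 0 := by
    intro k1 hk1 k2 hk2
    simp only [Finset.mem_Ico] at hk1
    rw [Finset.mem_erase, Finset.mem_Ico] at hk2
    obtain ⟨hne, hk2'⟩ := hk2
    have hcast : ∀ k3 : ℕ, ((k2 : ℂ) - (k1 : ℂ) - (k3 : ℂ))
        = (((k2 : ℤ) - (k1 : ℤ) - (k3 : ℤ) : ℤ) : ℂ) := by intro k3; push_cast; ring
    by_cases hmem : k2 ∈ Finset.Ico (k1 + 1) (min Lu (Lb + k1))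
    · rw [if_pos hmem]
      rw [Finset.mem_Ico, lt_min_iff] at hmem
      have hlt : k1 < k2 := hmem.1
      rw [Finset.sum_eq_single_of_mem (k2 - k1) (by rw [Finset.mem_Ico]; omega)
        (fun k3 hk3 hne3 => by
          rw [Finset.mem_Ico] at hk3
          have hd : ((k2 : ℤ) - (k1 : ℤ) - (k3 : ℤ)) ≠ 0 := by omega
          have hlt' : ((k2 : ℤ) - (k1 : ℤ) - (k3 : ℤ)).natAbs < Nc := by omega
          rw [Finset.sum_congr rfl (fun s _ => by rw [hcast k3]),
            exp_sum_ne Nc hNc t _ hd hlt']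
          ring)]
      have hz : ((k2 : ℂ) - (k1 : ℂ) - ((k2 - k1 : ℕ) : ℂ)) = 0 := by
        rw [Nat.cast_sub hlt.le]; ring
      have h1 : ∀ s ∈ Finset.range Nc,
          Complex.exp (-2 * (Real.pi : ℂ) * Complex.I *
            ((k2 : ℂ) - (k1 : ℂ) - ((k2 - k1 : ℕ) : ℂ)) * ((s : ℂ) - (t : ℂ)) / (Nc : ℂ)) = 1 := by
        intro s _
        rw [hz]
        simp
      rw [Finset.sum_congr rfl h1]
      simp [Finset.sum_const]
      ring
    · rw [if_neg hmem]
      rw [Finset.mem_Ico, lt_min_iff] at hmem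
      push_neg at hmem
      apply Finset.sum_eq_zero
      intro k3 hk3
      rw [Finset.mem_Ico] at hk3
      have hd : ((k2 : ℤ) - (k1 : ℤ) - (k3 : ℤ)) ≠ 0 := by omega
      have hlt' : ((k2 : ℤ) - (k1 : ℤ) - (k3 : ℤ)).natAbs < Nc := by omega
      rw [Finset.sum_congr rfl (fun s _ => by rw [hcast k3]),
        exp_sum_ne Nc hNc t _ hd hlt']
      ring
  rw [Finset.sum_congr rfl (fun k1 hk1 => Finset.sum_congr rfl (fun k2 hk2 => key k1 hk1 k2 hk2))]
  rw [Finset.mul_sum]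
  refine Finset.sum_congr rfl (fun k1 hk1 => ?_)
  rw [Finset.sum_ite_mem, Finset.mul_sum]
  congr 1
  ext k2
  simp only [Finset.mem_inter, Finset.mem_erase, Finset.mem_Ico, lt_min_iff]
  omega
end

section
/- Let Nc, Lu, Lb be positive integers with Nc ≥ Lu + Lb, let t be an integer, and let a(k) (1 ≤ k ≤ Lu−1) and b(k) (1 ≤ k ≤ Lb−1) be real numbers. Then Σ_{k1=1}^{Lb−1} Σ_{k2=1, k2≠k1}^{Lb−1} Σ_{k3=1}^{Lu−1} ( Σ_{s=0}^{Nc−1} exp(−2πi·(k1−k2−k3)·(s−t)/Nc) )·b(k1)·b(k2)·a(k3) = Nc·Σ_{k1=1}^{Lb−1} Σ_{k2=k1+1}^{min(Lb, Lu+k1)−1} b(k1)·b(k2)·a(k2−k1). -/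
open Finset

lemma expsum_zero (Nc : ℕ) (hNc : 0 < Nc) (m t : ℤ) (hm : ¬ ((Nc:ℤ) ∣ m)) :
    ∑ s ∈ Finset.range Nc,
      Complex.exp (-2 * (Real.pi : ℂ) * Complex.I * (m:ℂ) * ((s:ℂ) - (t:ℂ)) / (Nc:ℂ)) = 0 := by
  have hNc' : (Nc:ℂ) ≠ 0 := by exact_mod_cast hNc.ne'
  set z : ℂ := Complex.exp (-2 * (Real.pi:ℂ) * Complex.I * (m:ℂ) / Nc) with hz
  have hzt : ∀ s : ℕ, Complex.exp (-2 * (Real.pi : ℂ) * Complex.I * (m:ℂ) * ((s:ℂ) - (t:ℂ)) / (Nc:ℂ))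
      = z ^ s * Complex.exp (2 * (Real.pi:ℂ) * Complex.I * (m:ℂ) * (t:ℂ) / Nc) := by
    intro s
    rw [hz, ← Complex.exp_nat_mul, ← Complex.exp_add]
    ring_nf
  have hz1 : z ≠ 1 := by
    rw [hz, Ne, Complex.exp_eq_one_iff]
    rintro ⟨n, hn⟩
    apply hm
    refine ⟨-n, ?_⟩
    have hπ : (Real.pi:ℂ) ≠ 0 := by exact_mod_cast Real.pi_ne_zero
    have hC : (m:ℂ) = ((-n * Nc : ℤ) : ℂ) := by
      field_simp at hn
      push_cast
      have hI := Complex.I_ne_zero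
      have h2 : (2:ℂ) * (Real.pi:ℂ) * Complex.I ≠ 0 := by
        simp [hπ, hI]
      have : (2:ℂ) * (Real.pi:ℂ) * Complex.I * (m:ℂ) = (2:ℂ) * (Real.pi:ℂ) * Complex.I * (-(n:ℂ) * (Nc:ℂ)) := by
        linear_combination (-(2:ℂ) * (Real.pi:ℂ) * Complex.I) * hn
      exact mul_left_cancel₀ h2 this
    have hm' : m = -n * Nc := by exact_mod_cast hC
    linarith
  have hzN : z ^ Nc = 1 := by
    rw [hz, ← Complex.exp_nat_mul]
    have : (Nc:ℂ) * (-2 * (Real.pi:ℂ) * Complex.I * (m:ℂ) / Nc) = (-m : ℤ) * (2 * (Real.pi:ℂ) * Complex.I) := by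
      field_simp; ring; simp
    rw [this, Complex.exp_int_mul_two_pi_mul_I]
  calc ∑ s ∈ Finset.range Nc, Complex.exp (-2 * (Real.pi : ℂ) * Complex.I * (m:ℂ) * ((s:ℂ) - (t:ℂ)) / (Nc:ℂ))
      = (∑ s ∈ Finset.range Nc, z ^ s) * Complex.exp (2 * (Real.pi:ℂ) * Complex.I * (m:ℂ) * (t:ℂ) / Nc) := by
        rw [Finset.sum_mul]; exact Finset.sum_congr rfl fun s _ => hzt s
    _ = 0 := by rw [geom_sum_eq hz1, hzN]; simp

/-- **Lemma 1, eq. (58) of the paper.**  For `Nc ≥ Lu + Lb` and any integer `t`,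
`Σ_{k1=1}^{Lb−1} Σ_{k2≠k1} Σ_{k3=1}^{Lu−1} (Σ_{s=0}^{Nc−1} e^{−2πi(k1−k2−k3)(s−t)/Nc}) b(k1) b(k2) a(k3)
  = Nc · Σ_{k1=1}^{Lb−1} Σ_{k2=k1+1}^{min(Lb,Lu+k1)−1} b(k1) b(k2) a(k2−k1)`. -/
theorem dft_sum_collapse_offdiag_b
    (Nc Lu Lb : ℕ) (hNc : 0 < Nc) (hLu : 0 < Lu) (hLb : 0 < Lb)
    (hLen : Lu + Lb ≤ Nc) (t : ℤ) (a b : ℕ → ℝ) :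
    ∑ k1 ∈ Finset.Ico 1 Lb, ∑ k2 ∈ (Finset.Ico 1 Lb).erase k1, ∑ k3 ∈ Finset.Ico 1 Lu,
        (∑ s ∈ Finset.range Nc,
            Complex.exp (-2 * (Real.pi : ℂ) * Complex.I *
              ((k1 : ℂ) - (k2 : ℂ) - (k3 : ℂ)) * ((s : ℂ) - (t : ℂ)) / (Nc : ℂ))) *
          (b k1 : ℂ) * (b k2 : ℂ) * (a k3 : ℂ) =
      (Nc : ℂ) * ∑ k1 ∈ Finset.Ico 1 Lb, ∑ k2 ∈ Finset.Ico (k1 + 1) (min Lb (Lu + k1)),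
        (b k1 : ℂ) * (b k2 : ℂ) * (a (k2 - k1) : ℂ) := by
  -- Step 1: collapse the inner DFT sum to an indicator
  have hstep1 : ∀ k1 ∈ Finset.Ico 1 Lb, ∀ k2 ∈ (Finset.Ico 1 Lb).erase k1,
      ∀ k3 ∈ Finset.Ico 1 Lu,
      (∑ s ∈ Finset.range Nc,
          Complex.exp (-2 * (Real.pi : ℂ) * Complex.I *
            ((k1 : ℂ) - (k2 : ℂ) - (k3 : ℂ)) * ((s : ℂ) - (t : ℂ)) / (Nc : ℂ)))
        = (if k2 + k3 = k1 then (Nc:ℂ) else 0) := by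
    intro k1 hk1 k2 hk2 k3 hk3
    rw [Finset.mem_Ico] at hk1 hk3
    rw [Finset.mem_erase, Finset.mem_Ico] at hk2
    by_cases h : k2 + k3 = k1
    · have hz : (k1:ℂ) - (k2:ℂ) - (k3:ℂ) = 0 := by
        rw [← h]; push_cast; ring
      rw [if_pos h]
      simp [hz]
    · rw [if_neg h]
      have hcast : (k1:ℂ) - (k2:ℂ) - (k3:ℂ) = (((k1:ℤ) - k2 - k3 : ℤ) : ℂ) := by
        push_cast; ring
      rw [hcast]
      apply expsum_zero Nc hNc _ t
      intro hd
      have := Int.eq_zero_of_dvd_of_natAbs_lt_natAbs hd (by omega)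
      omega
  -- Step 2: collapse the sum over k3
  have hstep2 : ∀ k1 ∈ Finset.Ico 1 Lb, ∀ k2 ∈ (Finset.Ico 1 Lb).erase k1,
      ∑ k3 ∈ Finset.Ico 1 Lu,
        (if k2 + k3 = k1 then (Nc:ℂ) else 0) * (b k1 : ℂ) * (b k2 : ℂ) * (a k3 : ℂ)
      = (if k2 < k1 ∧ k1 - k2 < Lu then (Nc:ℂ) * (b k1 : ℂ) * (b k2 : ℂ) * (a (k1 - k2) : ℂ) else 0) := by
    intro k1 hk1 k2 hk2
    rw [Finset.mem_Ico] at hk1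
    rw [Finset.mem_erase, Finset.mem_Ico] at hk2
    by_cases hc : k2 < k1 ∧ k1 - k2 < Lu
    · rw [if_pos hc, Finset.sum_eq_single (k1 - k2)]
      · rw [if_pos (by omega)]
      · intro k3 hk3 hne
        rw [Finset.mem_Ico] at hk3
        rw [if_neg (by omega)]
        ring
      · intro habs
        exact absurd (Finset.mem_Ico.mpr ⟨by omega, by omega⟩) habs
    · rw [if_neg hc]
      apply Finset.sum_eq_zero
      intro k3 hk3
      rw [Finset.mem_Ico] at hk3
      rw [if_neg (by omega)]
      ring
  calc ∑ k1 ∈ Finset.Ico 1 Lb, ∑ k2 ∈ (Finset.Ico 1 Lb).erase k1, ∑ k3 ∈ Finset.Ico 1 Lu,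
        (∑ s ∈ Finset.range Nc,
            Complex.exp (-2 * (Real.pi : ℂ) * Complex.I *
              ((k1 : ℂ) - (k2 : ℂ) - (k3 : ℂ)) * ((s : ℂ) - (t : ℂ)) / (Nc : ℂ))) *
          (b k1 : ℂ) * (b k2 : ℂ) * (a k3 : ℂ)
      = ∑ k1 ∈ Finset.Ico 1 Lb, ∑ k2 ∈ (Finset.Ico 1 Lb).erase k1,
          (if k2 < k1 ∧ k1 - k2 < Lu then (Nc:ℂ) * (b k1 : ℂ) * (b k2 : ℂ) * (a (k1 - k2) : ℂ) else 0) := by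
        refine Finset.sum_congr rfl fun k1 hk1 => Finset.sum_congr rfl fun k2 hk2 => ?_
        rw [← hstep2 k1 hk1 k2 hk2]
        exact Finset.sum_congr rfl fun k3 hk3 => by rw [hstep1 k1 hk1 k2 hk2 k3 hk3]
    _ = ∑ k1 ∈ Finset.Ico 1 Lb,
          ∑ k2 ∈ (Finset.Ico 1 Lb).filter (fun k2 => k2 < k1 ∧ k1 - k2 < Lu),
            (Nc:ℂ) * (b k1 : ℂ) * (b k2 : ℂ) * (a (k1 - k2) : ℂ) := by
        refine Finset.sum_congr rfl fun k1 hk1 => ?_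
        rw [Finset.sum_filter, Finset.sum_erase]
        simp
    _ = ∑ k2 ∈ Finset.Ico 1 Lb,
          ∑ k1 ∈ (Finset.Ico 1 Lb).filter (fun k1 => k2 < k1 ∧ k1 - k2 < Lu),
            (Nc:ℂ) * (b k1 : ℂ) * (b k2 : ℂ) * (a (k1 - k2) : ℂ) := by
        apply Finset.sum_comm'
        intro x y
        simp only [Finset.mem_filter, Finset.mem_Ico]
        omega
    _ = ∑ k1 ∈ Finset.Ico 1 Lb, ∑ k2 ∈ Finset.Ico (k1 + 1) (min Lb (Lu + k1)),
          (Nc:ℂ) * ((b k1 : ℂ) * (b k2 : ℂ) * (a (k2 - k1) : ℂ)) := by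
        refine Finset.sum_congr rfl fun k1 hk1 => ?_
        rw [Finset.mem_Ico] at hk1
        rw [show Finset.Ico (k1 + 1) (min Lb (Lu + k1))
            = (Finset.Ico 1 Lb).filter (fun k2 => k1 < k2 ∧ k2 - k1 < Lu) by
          ext x; simp only [Finset.mem_filter, Finset.mem_Ico, lt_min_iff]; omega]
        exact Finset.sum_congr rfl fun k2 hk2 => by ring
    _ = (Nc : ℂ) * ∑ k1 ∈ Finset.Ico 1 Lb, ∑ k2 ∈ Finset.Ico (k1 + 1) (min Lb (Lu + k1)),
          (b k1 : ℂ) * (b k2 : ℂ) * (a (k2 - k1) : ℂ) := by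
        rw [Finset.mul_sum]
        exact Finset.sum_congr rfl fun k1 _ => by rw [Finset.mul_sum]
end

section
/- Let Nc, Lu, Lb be positive integers with Nc ≥ Lu + Lb, let t be an integer, and let a(k) (1 ≤ k ≤ Lu−1) and b(k) (1 ≤ k ≤ Lb−1) be real numbers. Then Σ_{k1=1}^{Lb−1} Σ_{k2=1, k2≠k1}^{Lb−1} Σ_{k3=1}^{Lu−1} Σ_{k4=1, k4≠k3}^{Lu−1} ( Σ_{s=0}^{Nc−1} exp(−2πi·(k1−k2+k3−k4)·(s−t)/Nc) )·b(k1)·b(k2)·a(k3)·a(k4) = 2·Nc·Σ_{k1=1}^{Lb−1} Σ_{k2=k1+1}^{min(Lb, Lu+k1−1)−1} Σ_{k3=k2−k1+1}^{Lu−1} b(k1)·b(k2)·a(k3)·a(k1−k2+k3). -/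
open Finset

lemma expsum (Nc : ℕ) (hNc : 0 < Nc) (t m : ℤ) (hm : m.natAbs < Nc) :
    ∑ s ∈ Finset.range Nc,
        Complex.exp (-2 * (Real.pi : ℂ) * Complex.I * (m : ℂ) * ((s : ℂ) - (t : ℂ)) / (Nc : ℂ))
      = if m = 0 then (Nc : ℂ) else 0 := by
  have hNc' : (Nc : ℂ) ≠ 0 := by exact_mod_cast hNc.ne'
  by_cases h : m = 0
  · subst h; simp
  · rw [if_neg h]
    have hterm : ∀ s ∈ Finset.range Nc,
        Complex.exp (-2 * (Real.pi : ℂ) * Complex.I * (m : ℂ) * ((s : ℂ) - (t : ℂ)) / (Nc : ℂ))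
          = Complex.exp (-2 * (Real.pi : ℂ) * Complex.I * (m : ℂ) / (Nc : ℂ)) ^ s
            * Complex.exp (2 * (Real.pi : ℂ) * Complex.I * (m : ℂ) * (t : ℂ) / (Nc : ℂ)) := by
      intro s _
      rw [← Complex.exp_nat_mul, ← Complex.exp_add]
      congr 1
      field_simp
      ring
    rw [Finset.sum_congr rfl hterm, ← Finset.sum_mul]
    have hπ : (Real.pi : ℂ) ≠ 0 := by exact_mod_cast Real.pi_ne_zero
    have h2πI : (2 * (Real.pi : ℂ) * Complex.I) ≠ 0 := by
      simp [hπ, Complex.I_ne_zero]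
    have hζ : Complex.exp (-2 * (Real.pi : ℂ) * Complex.I * (m : ℂ) / (Nc : ℂ)) ≠ 1 := by
      intro heq
      rw [Complex.exp_eq_one_iff] at heq
      obtain ⟨n, hn⟩ := heq
      have h2 : ((-m : ℤ) : ℂ) = ((n * Nc : ℤ) : ℂ) := by
        push_cast
        apply mul_left_cancel₀ h2πI
        field_simp at hn
        linear_combination (2 * (Real.pi : ℂ) * Complex.I) * hn
      have h3 : -m = n * Nc := by exact_mod_cast h2
      have hn0 : n ≠ 0 := by rintro rfl; simp at h3; omega
      have h4 : Nc ≤ (n * (Nc : ℤ)).natAbs := by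
        rw [Int.natAbs_mul, Int.natAbs_natCast]
        exact Nat.le_mul_of_pos_left _ (Int.natAbs_pos.mpr hn0)
      have h5 : m.natAbs = (n * (Nc : ℤ)).natAbs := by
        rw [← Int.natAbs_neg m, h3]
      omega
    rw [geom_sum_eq hζ]
    have hpow : Complex.exp (-2 * (Real.pi : ℂ) * Complex.I * (m : ℂ) / (Nc : ℂ)) ^ Nc = 1 := by
      rw [← Complex.exp_nat_mul]
      have : (Nc : ℂ) * (-2 * (Real.pi : ℂ) * Complex.I * (m : ℂ) / (Nc : ℂ))
          = ((-m : ℤ) : ℂ) * (2 * (Real.pi : ℂ) * Complex.I) := by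
        push_cast; field_simp
      rw [this, Complex.exp_int_mul_two_pi_mul_I]
    rw [hpow]
    simp


lemma inner_pair (Lu k1 k2 : ℕ) (hk : k1 < k2) (F : ℕ → ℕ → ℂ) :
    ∑ k3 ∈ Finset.Ico 1 Lu, ∑ k4 ∈ Finset.Ico 1 Lu,
        (if k1 + k3 = k2 + k4 then F k3 k4 else 0)
      = ∑ k3 ∈ Finset.Ico (k2 - k1 + 1) Lu, F k3 (k1 + k3 - k2) := by
  rw [← Finset.sum_subset (Finset.Ico_subset_Ico (by omega) le_rfl :
        Finset.Ico (k2 - k1 + 1) Lu ⊆ Finset.Ico 1 Lu)]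
  · apply Finset.sum_congr rfl
    intro k3 h3
    rw [Finset.mem_Ico] at h3
    rw [Finset.sum_eq_single_of_mem (k1 + k3 - k2)]
    · rw [if_pos (by omega)]
    · rw [Finset.mem_Ico]; omega
    · intro k4 h4 hne
      rw [if_neg (by omega)]
  · intro k3 h3 h3'
    rw [Finset.mem_Ico] at h3
    rw [Finset.mem_Ico] at h3'
    apply Finset.sum_eq_zero
    intro k4 h4
    rw [Finset.mem_Ico] at h4
    rw [if_neg (by omega)]

lemma double_antisym (Lb : ℕ) (g : ℕ → ℕ → ℂ)
    (hg : ∀ k1 k2, k1 ≠ k2 → g k1 k2 = g k2 k1) :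
    ∑ k1 ∈ Finset.Ico 1 Lb, ∑ k2 ∈ (Finset.Ico 1 Lb).erase k1, g k1 k2
      = 2 * ∑ k1 ∈ Finset.Ico 1 Lb, ∑ k2 ∈ Finset.Ico (k1 + 1) Lb, g k1 k2 := by
  have hsplit : ∀ k1 ∈ Finset.Ico 1 Lb,
      ∑ k2 ∈ (Finset.Ico 1 Lb).erase k1, g k1 k2
        = ∑ k2 ∈ Finset.Ico 1 k1, g k1 k2 + ∑ k2 ∈ Finset.Ico (k1 + 1) Lb, g k1 k2 := by
    intro k1 h1
    rw [Finset.mem_Ico] at h1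
    rw [← Finset.sum_union (by
      rw [Finset.disjoint_left]; intro x hx hx'
      rw [Finset.mem_Ico] at hx hx'; omega)]
    apply Finset.sum_congr _ (fun _ _ => rfl)
    ext x
    simp only [Finset.mem_erase, Finset.mem_Ico, Finset.mem_union]
    omega
  rw [Finset.sum_congr rfl hsplit, Finset.sum_add_distrib, two_mul]
  congr 1
  rw [Finset.sum_sigma', Finset.sum_sigma']
  apply Finset.sum_nbij' (fun p => (⟨p.2, p.1⟩ : (_ : ℕ) × ℕ))
    (fun p => (⟨p.2, p.1⟩ : (_ : ℕ) × ℕ))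
  · intro p hp
    simp only [Finset.mem_sigma, Finset.mem_Ico] at hp ⊢
    omega
  · intro p hp
    simp only [Finset.mem_sigma, Finset.mem_Ico] at hp ⊢
    omega
  · intro p _; rfl
  · intro p _; rfl
  · intro p hp
    simp only [Finset.mem_sigma, Finset.mem_Ico] at hp
    exact hg p.1 p.2 (by omega)

/-- **Lemma 1, eq. (59) of the paper.**  For `Nc ≥ Lu + Lb` and any integer `t`,
`Σ_{k1=1}^{Lb−1} Σ_{k2≠k1} Σ_{k3=1}^{Lu−1} Σ_{k4≠k3}
    (Σ_{s=0}^{Nc−1} e^{−2πi(k1−k2+k3−k4)(s−t)/Nc}) b(k1) b(k2) a(k3) a(k4)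
  = 2 Nc Σ_{k1=1}^{Lb−1} Σ_{k2=k1+1}^{min(Lb,Lu+k1−1)−1} Σ_{k3=k2−k1+1}^{Lu−1}
      b(k1) b(k2) a(k3) a(k1−k2+k3)`. -/
theorem dft_sum_collapse_quadruple
    (Nc Lu Lb : ℕ) (hNc : 0 < Nc) (hLu : 0 < Lu) (hLb : 0 < Lb)
    (hLen : Lu + Lb ≤ Nc) (t : ℤ) (a b : ℕ → ℝ) :
    ∑ k1 ∈ Finset.Ico 1 Lb, ∑ k2 ∈ (Finset.Ico 1 Lb).erase k1,
      ∑ k3 ∈ Finset.Ico 1 Lu, ∑ k4 ∈ (Finset.Ico 1 Lu).erase k3,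
        (∑ s ∈ Finset.range Nc,
            Complex.exp (-2 * (Real.pi : ℂ) * Complex.I *
              ((k1 : ℂ) - (k2 : ℂ) + (k3 : ℂ) - (k4 : ℂ)) * ((s : ℂ) - (t : ℂ)) / (Nc : ℂ))) *
          (b k1 : ℂ) * (b k2 : ℂ) * (a k3 : ℂ) * (a k4 : ℂ) =
      2 * (Nc : ℂ) * ∑ k1 ∈ Finset.Ico 1 Lb,
        ∑ k2 ∈ Finset.Ico (k1 + 1) (min Lb (Lu + k1 - 1)),
          ∑ k3 ∈ Finset.Ico (k2 - k1 + 1) Lu,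
            (b k1 : ℂ) * (b k2 : ℂ) * (a k3 : ℂ) * (a (k1 + k3 - k2) : ℂ) := by
  have key : ∀ k1 ∈ Finset.Ico 1 Lb, ∀ k2 ∈ (Finset.Ico 1 Lb).erase k1,
      (∑ k3 ∈ Finset.Ico 1 Lu, ∑ k4 ∈ (Finset.Ico 1 Lu).erase k3,
        (∑ s ∈ Finset.range Nc,
            Complex.exp (-2 * (Real.pi : ℂ) * Complex.I *
              ((k1 : ℂ) - (k2 : ℂ) + (k3 : ℂ) - (k4 : ℂ)) * ((s : ℂ) - (t : ℂ)) / (Nc : ℂ))) *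
          (b k1 : ℂ) * (b k2 : ℂ) * (a k3 : ℂ) * (a k4 : ℂ))
      = (Nc : ℂ) * ∑ k3 ∈ Finset.Ico 1 Lu, ∑ k4 ∈ Finset.Ico 1 Lu,
          (if k1 + k3 = k2 + k4 then
            (b k1 : ℂ) * (b k2 : ℂ) * (a k3 : ℂ) * (a k4 : ℂ) else 0) := by
    intro k1 h1 k2 h2
    rw [Finset.mem_Ico] at h1
    rw [Finset.mem_erase, Finset.mem_Ico] at h2
    rw [Finset.mul_sum]
    apply Finset.sum_congr rfl
    intro k3 h3
    rw [Finset.mem_Ico] at h3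
    have hptwise : ∀ k4 ∈ Finset.Ico 1 Lu,
        (∑ s ∈ Finset.range Nc,
            Complex.exp (-2 * (Real.pi : ℂ) * Complex.I *
              ((k1 : ℂ) - (k2 : ℂ) + (k3 : ℂ) - (k4 : ℂ)) * ((s : ℂ) - (t : ℂ)) / (Nc : ℂ))) *
          (b k1 : ℂ) * (b k2 : ℂ) * (a k3 : ℂ) * (a k4 : ℂ)
        = (Nc : ℂ) * (if k1 + k3 = k2 + k4 then
            (b k1 : ℂ) * (b k2 : ℂ) * (a k3 : ℂ) * (a k4 : ℂ) else 0) := by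
      intro k4 h4
      rw [Finset.mem_Ico] at h4
      have hm : ((k1 : ℤ) - k2 + k3 - k4).natAbs < Nc := by omega
      have hcast : (((k1 : ℤ) - k2 + k3 - k4 : ℤ) : ℂ)
          = (k1 : ℂ) - (k2 : ℂ) + (k3 : ℂ) - (k4 : ℂ) := by push_cast; ring
      rw [← hcast, expsum Nc hNc t _ hm]
      rcases eq_or_ne (k1 + k3) (k2 + k4) with hEq | hNe
      · rw [if_pos (by omega), if_pos hEq]; ring
      · rw [if_neg (by omega), if_neg hNe]; ring
    calc ∑ k4 ∈ (Finset.Ico 1 Lu).erase k3,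
          (∑ s ∈ Finset.range Nc,
            Complex.exp (-2 * (Real.pi : ℂ) * Complex.I *
              ((k1 : ℂ) - (k2 : ℂ) + (k3 : ℂ) - (k4 : ℂ)) * ((s : ℂ) - (t : ℂ)) / (Nc : ℂ))) *
          (b k1 : ℂ) * (b k2 : ℂ) * (a k3 : ℂ) * (a k4 : ℂ)
        = ∑ k4 ∈ (Finset.Ico 1 Lu).erase k3,
            (Nc : ℂ) * (if k1 + k3 = k2 + k4 then
              (b k1 : ℂ) * (b k2 : ℂ) * (a k3 : ℂ) * (a k4 : ℂ) else 0) :=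
          Finset.sum_congr rfl fun k4 h4 => hptwise k4 (Finset.mem_of_mem_erase h4)
      _ = ∑ k4 ∈ Finset.Ico 1 Lu,
            (Nc : ℂ) * (if k1 + k3 = k2 + k4 then
              (b k1 : ℂ) * (b k2 : ℂ) * (a k3 : ℂ) * (a k4 : ℂ) else 0) := by
          apply Finset.sum_erase
          rw [if_neg (by omega), mul_zero]
      _ = (Nc : ℂ) * ∑ k4 ∈ Finset.Ico 1 Lu,
            (if k1 + k3 = k2 + k4 then
              (b k1 : ℂ) * (b k2 : ℂ) * (a k3 : ℂ) * (a k4 : ℂ) else 0) := by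
          rw [Finset.mul_sum]
  rw [Finset.sum_congr rfl (fun k1 h1 => Finset.sum_congr rfl (fun k2 h2 => key k1 h1 k2 h2))]
  simp_rw [← Finset.mul_sum]
  have hsym : ∀ k1 k2 : ℕ, k1 ≠ k2 →
      (∑ k3 ∈ Finset.Ico 1 Lu, ∑ k4 ∈ Finset.Ico 1 Lu,
        (if k1 + k3 = k2 + k4 then (b k1 : ℂ) * (b k2 : ℂ) * (a k3 : ℂ) * (a k4 : ℂ) else 0))
      = ∑ k3 ∈ Finset.Ico 1 Lu, ∑ k4 ∈ Finset.Ico 1 Lu,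
        (if k2 + k3 = k1 + k4 then (b k2 : ℂ) * (b k1 : ℂ) * (a k3 : ℂ) * (a k4 : ℂ) else 0) := by
    intro k1 k2 hne
    rw [Finset.sum_comm]
    apply Finset.sum_congr rfl
    intro x _
    apply Finset.sum_congr rfl
    intro y _
    by_cases hc : k2 + x = k1 + y
    · rw [if_pos (by omega), if_pos hc]; ring
    · rw [if_neg (by omega), if_neg hc]
  rw [double_antisym Lb _ (fun k1 k2 h => hsym k1 k2 h)]
  have inner2 : ∀ k1 ∈ Finset.Ico 1 Lb,
      ∑ k2 ∈ Finset.Ico (k1 + 1) Lb, ∑ k3 ∈ Finset.Ico 1 Lu, ∑ k4 ∈ Finset.Ico 1 Lu,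
          (if k1 + k3 = k2 + k4 then
            (b k1 : ℂ) * (b k2 : ℂ) * (a k3 : ℂ) * (a k4 : ℂ) else 0)
      = ∑ k2 ∈ Finset.Ico (k1 + 1) (min Lb (Lu + k1 - 1)),
          ∑ k3 ∈ Finset.Ico (k2 - k1 + 1) Lu,
            (b k1 : ℂ) * (b k2 : ℂ) * (a k3 : ℂ) * (a (k1 + k3 - k2) : ℂ) := by
    intro k1 h1
    rw [Finset.mem_Ico] at h1
    rw [Finset.sum_congr rfl (fun k2 h2 => inner_pair Lu k1 k2
      (by rw [Finset.mem_Ico] at h2; omega)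
      (fun k3 k4 => (b k1 : ℂ) * (b k2 : ℂ) * (a k3 : ℂ) * (a k4 : ℂ)))]
    rw [← Finset.sum_subset (Finset.Ico_subset_Ico le_rfl (min_le_left _ _))]
    intro k2 h2 h2'
    rw [Finset.mem_Ico] at h2
    rw [Finset.mem_Ico] at h2'
    rw [Finset.Ico_eq_empty (by omega), Finset.sum_empty]
  rw [Finset.sum_congr rfl inner2]
  ring
end

section
/- For all integers s and t: E[ conj(g(s))·g(t) ] = β·σ(0)^2/(K+1) + β·Σ_{k=1}^{L−1} exp(−2πi·k·(t−s)/N)·σ(k)^2. -/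
open MeasureTheory ProbabilityTheory Complex Finset

noncomputable section

section GaussMoments

open Real

lemma myPdf_eq : gaussianPDFReal 0 1 =
    fun x => (Real.sqrt (2 * π))⁻¹ * Real.exp (-(1/2) * x ^ 2) := by
  funext x
  rw [gaussianPDFReal]
  rw [show (2:ℝ) * π * (1:NNReal) = 2 * π by norm_num]
  congr 1
  norm_num
  ring

lemma myIntegral_std (g : ℝ → ℝ) :
    ∫ x, g x ∂(gaussianReal 0 1) = ∫ x, gaussianPDFReal 0 1 x * g x := by
  rw [gaussianReal_of_var_ne_zero _ one_ne_zero]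
  have h : gaussianPDF 0 1 = fun x => ((gaussianPDFReal 0 1 x).toNNReal : ENNReal) := rfl
  rw [h, integral_withDensity_eq_integral_smul
    ((measurable_gaussianPDFReal 0 1).real_toNNReal)]
  congr 1
  funext x
  rw [NNReal.smul_def, Real.coe_toNNReal _ (gaussianPDFReal_nonneg 0 1 x), smul_eq_mul]

lemma myIntegrable_std (g : ℝ → ℝ) :
    Integrable g (gaussianReal 0 1) ↔
      Integrable (fun x => gaussianPDFReal 0 1 x * g x) := by
  rw [gaussianReal_of_var_ne_zero _ one_ne_zero]
  have h : gaussianPDF 0 1 = fun x => ((gaussianPDFReal 0 1 x).toNNReal : ENNReal) := rfl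
  rw [h, integrable_withDensity_iff_integrable_smul
    ((measurable_gaussianPDFReal 0 1).real_toNNReal)]
  have : (fun x => (gaussianPDFReal 0 1 x).toNNReal • g x)
      = fun x => gaussianPDFReal 0 1 x * g x := by
    funext x
    rw [NNReal.smul_def, Real.coe_toNNReal _ (gaussianPDFReal_nonneg 0 1 x), smul_eq_mul]
  rw [this]

lemma myIntegrable_id : Integrable (fun x : ℝ => x) (gaussianReal 0 1) := by
  rw [myIntegrable_std]
  have h := (integrable_mul_exp_neg_mul_sq (b := 1/2) (by norm_num)).const_mul
    (Real.sqrt (2 * π))⁻¹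
  refine h.congr ?_
  filter_upwards with x
  rw [myPdf_eq]
  ring

lemma myIntegrable_sq : Integrable (fun x : ℝ => x * x) (gaussianReal 0 1) := by
  rw [myIntegrable_std]
  have h2 : Integrable (fun x : ℝ => x ^ 2 * Real.exp (-(1/2) * x ^ 2)) := by
    have := integrable_rpow_mul_exp_neg_mul_sq (b := 1/2) (by norm_num) (s := 2) (by norm_num)
    simpa [Real.rpow_two] using this
  refine (h2.const_mul (Real.sqrt (2 * π))⁻¹).congr ?_
  filter_upwards with x
  rw [myPdf_eq]
  ring

lemma myIntegral_id : ∫ x, x ∂(gaussianReal 0 1) = 0 := by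
  rw [myIntegral_std]
  have h1 : ∫ x, gaussianPDFReal 0 1 x * x
      = ∫ x, gaussianPDFReal 0 1 (-x) * (-x) :=
    (integral_neg_eq_self (fun x => gaussianPDFReal 0 1 x * x) volume).symm
  have h2 : (fun x => gaussianPDFReal 0 1 (-x) * (-x))
      = fun x => -(gaussianPDFReal 0 1 x * x) := by
    funext x
    rw [myPdf_eq]
    simp only [neg_sq]
    ring
  rw [h2, integral_neg] at h1
  linarith

lemma myIntegral_sq : ∫ x, x * x ∂(gaussianReal 0 1) = 1 := by
  rw [myIntegral_std]
  have hE : Integrable (fun x : ℝ => Real.exp (-(1/2) * x ^ 2)) :=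
    integrable_exp_neg_mul_sq (by norm_num)
  have h2 : Integrable (fun x : ℝ => x ^ 2 * Real.exp (-(1/2) * x ^ 2)) := by
    have := integrable_rpow_mul_exp_neg_mul_sq (b := 1/2) (by norm_num) (s := 2) (by norm_num)
    simpa [Real.rpow_two] using this
  have hderiv : ∀ x : ℝ, HasDerivAt (fun y : ℝ => -(y * Real.exp (-(1/2) * y ^ 2)))
      (x ^ 2 * Real.exp (-(1/2) * x ^ 2) - Real.exp (-(1/2) * x ^ 2)) x := by
    intro x
    have hE' : HasDerivAt (fun y : ℝ => Real.exp (-(1/2) * y ^ 2))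
        (Real.exp (-(1/2) * x ^ 2) * (-(1/2) * (2 * x ^ 1))) x :=
      ((hasDerivAt_pow 2 x).const_mul (-(1/2))).exp
    have := ((hasDerivAt_id x).mul hE').neg
    refine this.congr_deriv ?_
    simp [id]
    ring
  have hF : Integrable (fun x : ℝ => -(x * Real.exp (-(1/2) * x ^ 2))) :=
    (integrable_mul_exp_neg_mul_sq (b := 1/2) (by norm_num)).neg
  have hz := integral_eq_zero_of_hasDerivAt_of_integrable hderiv (h2.sub hE) hF
  rw [integral_sub h2 hE, sub_eq_zero] at hz
  have hG : ∫ x : ℝ, Real.exp (-(1/2) * x ^ 2) = Real.sqrt (2 * π) := by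
    rw [integral_gaussian]
    rw [show π / (1/2 : ℝ) = 2 * π by ring]
  have hpos : (0:ℝ) < Real.sqrt (2 * π) := Real.sqrt_pos.2 (by positivity)
  have : ∫ x, gaussianPDFReal 0 1 x * (x * x)
      = (Real.sqrt (2 * π))⁻¹ * ∫ x, x ^ 2 * Real.exp (-(1/2) * x ^ 2) := by
    rw [← integral_const_mul]
    congr 1
    funext x
    rw [myPdf_eq]
    ring
  rw [this, hz, hG, inv_mul_cancel₀ hpos.ne']

end GaussMoments

/-- The frequency-domain channel coefficient
`g(t) = √(β/(K+1)) h(0) + √(Nβ) Σ_{k=1}^{L−1} f(t,k) h(k)`, where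
`h(k) = σ(k)(X(k)+iY(k))/√2` and `f(t,k) = N^{-1/2} e^{-2πi t k/N}`. -/
def gChan (N L : ℕ) (β K : ℝ) (σ : ℕ → ℝ) {Ω : Type*} (X Y : ℕ → Ω → ℝ)
    (t : ℤ) (ω : Ω) : ℂ :=
  (Real.sqrt (β / (K + 1)) : ℂ) *
      ((σ 0 : ℂ) * ((X 0 ω : ℂ) + (Y 0 ω : ℂ) * Complex.I) / (Real.sqrt 2 : ℂ))
    + (Real.sqrt (N * β) : ℂ) *
        ∑ k ∈ Finset.Ico 1 L,
          ((1 / Real.sqrt N : ℂ) *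
              Complex.exp (-2 * (Real.pi : ℂ) * Complex.I * (t : ℂ) * (k : ℂ) / (N : ℂ))) *
            ((σ k : ℂ) * ((X k ω : ℂ) + (Y k ω : ℂ) * Complex.I) / (Real.sqrt 2 : ℂ))

/-- **Lemma 2, eq. (61) of the paper:**
`E[conj(g(s)) g(t)] = β σ(0)²/(K+1) + β Σ_{k=1}^{L−1} e^{−2πik(t−s)/N} σ(k)²`. -/
theorem expectation_conj_g_mul_g
    {Ω : Type*} [MeasurableSpace Ω] (μ : Measure Ω) [IsProbabilityMeasure μ]
    (N L : ℕ) (hN : 1 ≤ N) (hL : 1 ≤ L) (β K : ℝ) (hβ : 0 < β) (hK : 0 ≤ K)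
    (σ : ℕ → ℝ) (hσ : ∀ k < L, 0 ≤ σ k)
    (X Y : ℕ → Ω → ℝ)
    (hXm : ∀ k < L, Measurable (X k)) (hYm : ∀ k < L, Measurable (Y k))
    (hXlaw : ∀ k < L, Measure.map (X k) μ = gaussianReal 0 1)
    (hYlaw : ∀ k < L, Measure.map (Y k) μ = gaussianReal 0 1)
    (hindep : iIndepFun
      (fun q : Fin L × Bool => cond q.2 (Y (q.1 : ℕ)) (X (q.1 : ℕ))) μ)
    (s t : ℤ) :
    ∫ ω, (starRingEnd ℂ) (gChan N L β K σ X Y s ω) * gChan N L β K σ X Y t ω ∂μ =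
      ((β * σ 0 ^ 2 / (K + 1) : ℝ) : ℂ)
        + (β : ℂ) * ∑ k ∈ Finset.Ico 1 L,
            Complex.exp (-2 * (Real.pi : ℂ) * Complex.I * (k : ℂ) * ((t : ℂ) - (s : ℂ)) / (N : ℂ)) *
              ((σ k ^ 2 : ℝ) : ℂ) := by
  classical
  have hNne : (N : ℂ) ≠ 0 := Nat.cast_ne_zero.mpr (by omega)
  -- facts about a single standard gaussian rv
  have base : ∀ W : Ω → ℝ, Measurable W → Measure.map W μ = gaussianReal 0 1 →
      Integrable W μ ∧ (∫ ω, W ω ∂μ) = 0 ∧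
        Integrable (fun ω => W ω * W ω) μ ∧ (∫ ω, W ω * W ω ∂μ) = 1 := by
    intro W hm hlaw
    have h1 : Integrable W μ := by
      have h := myIntegrable_id
      rw [← hlaw] at h
      exact (integrable_map_measure aestronglyMeasurable_id hm.aemeasurable).mp h
    have h2 : (∫ ω, W ω ∂μ) = 0 := by
      have h := integral_map (μ := μ) (f := fun x : ℝ => x) hm.aemeasurable
        aestronglyMeasurable_id
      rw [hlaw, myIntegral_id] at h
      exact h.symm
    have h3 : Integrable (fun ω => W ω * W ω) μ := by
      have h := myIntegrable_sq
      rw [← hlaw] at h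
      exact (integrable_map_measure
        (measurable_id.mul measurable_id).aestronglyMeasurable hm.aemeasurable).mp h
    have h4 : (∫ ω, W ω * W ω ∂μ) = 1 := by
      have h := integral_map (μ := μ) (f := fun x : ℝ => x * x) hm.aemeasurable
        (measurable_id.mul measurable_id).aestronglyMeasurable
      rw [hlaw, myIntegral_sq] at h
      exact h.symm
    exact ⟨h1, h2, h3, h4⟩
  -- independent mean-zero products
  have pairZero : ∀ W V : Ω → ℝ, Integrable W μ → Integrable V μ →
      (∫ ω, W ω ∂μ) = 0 → IndepFun W V μ →
      Integrable (fun ω => W ω * V ω) μ ∧ (∫ ω, W ω * V ω ∂μ) = 0 := by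
    intro W V hW hV hWz hWV
    refine ⟨hWV.integrable_mul hW hV, ?_⟩
    have h := hWV.integral_mul_eq_mul_integral hW.aestronglyMeasurable hV.aestronglyMeasurable
    have h2 : (∫ ω, W ω * V ω ∂μ) = ∫ ω, (W * V) ω ∂μ := rfl
    rw [h2, h, hWz, zero_mul]
  -- independence of the coordinates
  have indXX : ∀ j k (hj : j < L) (hk : k < L), j ≠ k → IndepFun (X j) (X k) μ := by
    intro j k hj hk hjk
    exact hindep.indepFun (i := (⟨j, hj⟩, false)) (j := (⟨k, hk⟩, false))
      (by simp [Prod.ext_iff, Fin.ext_iff, hjk])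
  have indYY : ∀ j k (hj : j < L) (hk : k < L), j ≠ k → IndepFun (Y j) (Y k) μ := by
    intro j k hj hk hjk
    exact hindep.indepFun (i := (⟨j, hj⟩, true)) (j := (⟨k, hk⟩, true))
      (by simp [Prod.ext_iff, Fin.ext_iff, hjk])
  have indXY : ∀ j k (hj : j < L) (hk : k < L), IndepFun (X j) (Y k) μ := by
    intro j k hj hk
    exact hindep.indepFun (i := (⟨j, hj⟩, false)) (j := (⟨k, hk⟩, true))
      (by simp [Prod.ext_iff])
  have indYX : ∀ j k (hj : j < L) (hk : k < L), IndepFun (Y j) (X k) μ := by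
    intro j k hj hk
    exact hindep.indepFun (i := (⟨j, hj⟩, true)) (j := (⟨k, hk⟩, false))
      (by simp [Prod.ext_iff])
  -- the complex coefficient h(k)
  set H : ℕ → Ω → ℂ := fun k ω =>
    (σ k : ℂ) * ((X k ω : ℂ) + (Y k ω : ℂ) * Complex.I) / (Real.sqrt 2 : ℂ) with hH
  have Hprod : ∀ j k, (fun ω => (starRingEnd ℂ) (H j ω) * H k ω) = fun ω =>
      ((σ j * σ k / 2 : ℝ) : ℂ) *
        (((X j ω * X k ω + Y j ω * Y k ω : ℝ) : ℂ)
          + ((X j ω * Y k ω - Y j ω * X k ω : ℝ) : ℂ) * Complex.I) := by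
    intro j k
    funext ω
    have h2 : ((Real.sqrt 2 : ℝ) : ℂ) * ((Real.sqrt 2 : ℝ) : ℂ) = 2 := by
      rw [← Complex.ofReal_mul, Real.mul_self_sqrt (by norm_num)]
      norm_num
    have hne : ((Real.sqrt 2 : ℝ) : ℂ) ≠ 0 :=
      Complex.ofReal_ne_zero.mpr (Real.sqrt_ne_zero'.mpr (by norm_num))
    simp only [hH, map_div₀, map_mul, map_add, Complex.conj_ofReal, Complex.conj_I]
    push_cast
    field_simp
    ring_nf
    simp only [Complex.I_sq, Complex.I_mul_I, pow_two, h2]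
    ring
  have intOfReal : ∀ f : Ω → ℝ, ∫ ω, ((f ω : ℝ) : ℂ) ∂μ = ((∫ ω, f ω ∂μ : ℝ) : ℂ) := by
    intro f
    exact integral_ofReal
  -- the key integral of conj (H j) * H k
  have Hfact : ∀ j k, j < L → k < L →
      Integrable (fun ω => (starRingEnd ℂ) (H j ω) * H k ω) μ ∧
      (∫ ω, (starRingEnd ℂ) (H j ω) * H k ω ∂μ)
        = if j = k then ((σ k ^ 2 : ℝ) : ℂ) else 0 := by
    intro j k hj hk
    obtain ⟨iXj, mXj, iXXj, vXXj⟩ := base (X j) (hXm j hj) (hXlaw j hj)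
    obtain ⟨iXk, mXk, iXXk, vXXk⟩ := base (X k) (hXm k hk) (hXlaw k hk)
    obtain ⟨iYj, mYj, iYYj, vYYj⟩ := base (Y j) (hYm j hj) (hYlaw j hj)
    obtain ⟨iYk, mYk, iYYk, vYYk⟩ := base (Y k) (hYm k hk) (hYlaw k hk)
    have pXX : Integrable (fun ω => X j ω * X k ω) μ ∧
        (∫ ω, X j ω * X k ω ∂μ) = if j = k then 1 else 0 := by
      by_cases h : j = k
      · subst h; simpa using ⟨iXXj, vXXj⟩
      · simpa [h] using pairZero _ _ iXj iXk mXj (indXX j k hj hk h)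
    have pYY : Integrable (fun ω => Y j ω * Y k ω) μ ∧
        (∫ ω, Y j ω * Y k ω ∂μ) = if j = k then 1 else 0 := by
      by_cases h : j = k
      · subst h; simpa using ⟨iYYj, vYYj⟩
      · simpa [h] using pairZero _ _ iYj iYk mYj (indYY j k hj hk h)
    have pXY : Integrable (fun ω => X j ω * Y k ω) μ ∧
        (∫ ω, X j ω * Y k ω ∂μ) = 0 := pairZero _ _ iXj iYk mXj (indXY j k hj hk)
    have pYX : Integrable (fun ω => Y j ω * X k ω) μ ∧
        (∫ ω, Y j ω * X k ω ∂μ) = 0 := pairZero _ _ iYj iXk mYj (indYX j k hj hk)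
    have ia : Integrable (fun ω => X j ω * X k ω + Y j ω * Y k ω) μ := pXX.1.add pYY.1
    have ib : Integrable (fun ω => X j ω * Y k ω - Y j ω * X k ω) μ := pXY.1.sub pYX.1
    have iac : Integrable (fun ω => ((X j ω * X k ω + Y j ω * Y k ω : ℝ) : ℂ)) μ := ia.ofReal
    have ibc : Integrable
        (fun ω => ((X j ω * Y k ω - Y j ω * X k ω : ℝ) : ℂ) * Complex.I) μ :=
      ib.ofReal.mul_const _
    rw [Hprod j k]
    constructor
    · exact (iac.add ibc).const_mul _
    · rw [integral_const_mul, integral_add iac ibc, integral_mul_const,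
        intOfReal, intOfReal, integral_add pXX.1 pYY.1,
        integral_sub pXY.1 pYX.1, pXX.2, pYY.2, pXY.2, pYX.2]
      by_cases h : j = k
      · subst h
        simp only [if_pos rfl]
        push_cast
        ring
      · simp only [if_neg h]
        push_cast
        ring
  -- the coefficients
  set cc : ℤ → ℕ → ℂ := fun r k =>
    if k = 0 then ((Real.sqrt (β / (K + 1)) : ℝ) : ℂ)
    else (Real.sqrt (N * β) : ℂ) *
      ((1 / Real.sqrt N : ℂ) *
        Complex.exp (-2 * (Real.pi : ℂ) * Complex.I * (r : ℂ) * (k : ℂ) / (N : ℂ))) with hcc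
  have hrange : Finset.range L = insert 0 (Finset.Ico 1 L) := by
    ext a
    simp only [Finset.mem_range, Finset.mem_insert, Finset.mem_Ico]
    omega
  have gsum : ∀ (r : ℤ) (ω : Ω),
      gChan N L β K σ X Y r ω = ∑ k ∈ Finset.range L, cc r k * H k ω := by
    intro r ω
    rw [hrange, Finset.sum_insert (by simp), gChan, Finset.mul_sum]
    refine congrArg₂ (· + ·) ?_ (Finset.sum_congr rfl fun k hk => ?_)
    · simp [hcc, hH]
    · have hk0 : k ≠ 0 := by
        have := (Finset.mem_Ico.mp hk).1; omega
      simp only [hcc, if_neg hk0, hH]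
      ring
  have integrand_eq : ∀ ω : Ω,
      (starRingEnd ℂ) (gChan N L β K σ X Y s ω) * gChan N L β K σ X Y t ω
      = ∑ j ∈ Finset.range L, ∑ k ∈ Finset.range L,
          ((starRingEnd ℂ) (cc s j) * cc t k) *
            ((starRingEnd ℂ) (H j ω) * H k ω) := by
    intro ω
    rw [gsum s ω, gsum t ω, map_sum, Finset.sum_mul_sum]
    refine Finset.sum_congr rfl fun j _ => Finset.sum_congr rfl fun k _ => ?_
    rw [map_mul]
    ring
  calc ∫ ω, (starRingEnd ℂ) (gChan N L β K σ X Y s ω) * gChan N L β K σ X Y t ω ∂μ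
      = ∫ ω, ∑ j ∈ Finset.range L, ∑ k ∈ Finset.range L,
          ((starRingEnd ℂ) (cc s j) * cc t k) *
            ((starRingEnd ℂ) (H j ω) * H k ω) ∂μ :=
        integral_congr_ae (Filter.Eventually.of_forall integrand_eq)
    _ = ∑ j ∈ Finset.range L, ∑ k ∈ Finset.range L,
          ((starRingEnd ℂ) (cc s j) * cc t k) *
            ∫ ω, (starRingEnd ℂ) (H j ω) * H k ω ∂μ := by
        rw [integral_finset_sum _ (fun j hj => integrable_finset_sum _
          (fun k hk => ((Hfact j k (Finset.mem_range.mp hj)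
            (Finset.mem_range.mp hk)).1.const_mul _)))]
        refine Finset.sum_congr rfl fun j hj => ?_
        rw [integral_finset_sum _ (fun k hk => ((Hfact j k (Finset.mem_range.mp hj)
          (Finset.mem_range.mp hk)).1.const_mul _))]
        exact Finset.sum_congr rfl fun k hk => integral_const_mul _ _
    _ = ∑ j ∈ Finset.range L,
          ((starRingEnd ℂ) (cc s j) * cc t j) * ((σ j ^ 2 : ℝ) : ℂ) := by
        refine Finset.sum_congr rfl fun j hj => ?_
        have hj' := Finset.mem_range.mp hj
        rw [Finset.sum_congr rfl (fun k hk => by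
          rw [(Hfact j k hj' (Finset.mem_range.mp hk)).2])]
        simp only [mul_ite, mul_zero]
        rw [Finset.sum_ite_eq (Finset.range L) j
          (fun k => ((starRingEnd ℂ) (cc s j) * cc t k) * ((σ k ^ 2 : ℝ) : ℂ)), if_pos hj]
    _ = ((β * σ 0 ^ 2 / (K + 1) : ℝ) : ℂ)
        + (β : ℂ) * ∑ k ∈ Finset.Ico 1 L,
            Complex.exp (-2 * (Real.pi : ℂ) * Complex.I * (k : ℂ) *
              ((t : ℂ) - (s : ℂ)) / (N : ℂ)) * ((σ k ^ 2 : ℝ) : ℂ) := by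
        rw [hrange, Finset.sum_insert (by simp)]
        congr 1
        · simp only [hcc, if_pos rfl, Complex.conj_ofReal]
          rw [← Complex.ofReal_mul, Real.mul_self_sqrt (by positivity)]
          push_cast
          ring
        · rw [Finset.mul_sum]
          refine Finset.sum_congr rfl fun k hk => ?_
          have hk0 : k ≠ 0 := by
            have := (Finset.mem_Ico.mp hk).1; omega
          simp only [hcc, if_neg hk0]
          have hcexp : (starRingEnd ℂ)
              (Complex.exp (-2 * (Real.pi : ℂ) * Complex.I * (s : ℂ) * (k : ℂ) / (N : ℂ)))
              = Complex.exp (2 * (Real.pi : ℂ) * Complex.I * (s : ℂ) * (k : ℂ) / (N : ℂ)) := by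
            rw [← Complex.exp_conj]
            congr 1
            simp only [map_div₀, map_mul, Complex.conj_I, map_neg, map_ofNat,
              Complex.conj_ofReal, map_intCast, map_natCast]
            ring
          have hsN : ((Real.sqrt N : ℝ) : ℂ) * ((Real.sqrt N : ℝ) : ℂ) = (N : ℂ) := by
            rw [← Complex.ofReal_mul, Real.mul_self_sqrt (Nat.cast_nonneg N)]
            norm_cast
          have hsNβ : ((Real.sqrt (N * β) : ℝ) : ℂ) * ((Real.sqrt (N * β) : ℝ) : ℂ)
              = ((N * β : ℝ) : ℂ) := by
            rw [← Complex.ofReal_mul, Real.mul_self_sqrt (by positivity)]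
          rw [map_mul, map_mul, Complex.conj_ofReal, hcexp]
          have hconj1 : (starRingEnd ℂ) (1 / (Real.sqrt N : ℂ)) = 1 / (Real.sqrt N : ℂ) := by
            rw [map_div₀, map_one, Complex.conj_ofReal]
          rw [hconj1]
          have hexp : Complex.exp (2 * (Real.pi : ℂ) * Complex.I * (s : ℂ) * (k : ℂ) / (N : ℂ))
              * Complex.exp (-2 * (Real.pi : ℂ) * Complex.I * (t : ℂ) * (k : ℂ) / (N : ℂ))
              = Complex.exp (-2 * (Real.pi : ℂ) * Complex.I * (k : ℂ) *
                  ((t : ℂ) - (s : ℂ)) / (N : ℂ)) := by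
            rw [← Complex.exp_add]
            congr 1
            ring
          calc ((Real.sqrt (N * β) : ℝ) : ℂ) *
                (1 / (Real.sqrt N : ℂ) *
                  Complex.exp (2 * (Real.pi : ℂ) * Complex.I * (s : ℂ) * (k : ℂ) / (N : ℂ))) *
              ((Real.sqrt (N * β) : ℂ) *
                (1 / (Real.sqrt N : ℂ) *
                  Complex.exp (-2 * (Real.pi : ℂ) * Complex.I * (t : ℂ) * (k : ℂ) / (N : ℂ)))) *
              ((σ k ^ 2 : ℝ) : ℂ)
              = (((Real.sqrt (N * β) : ℝ) : ℂ) * ((Real.sqrt (N * β) : ℝ) : ℂ)) *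
                ((1 / (Real.sqrt N : ℂ)) * (1 / (Real.sqrt N : ℂ))) *
                (Complex.exp (2 * (Real.pi : ℂ) * Complex.I * (s : ℂ) * (k : ℂ) / (N : ℂ)) *
                  Complex.exp (-2 * (Real.pi : ℂ) * Complex.I * (t : ℂ) * (k : ℂ) / (N : ℂ))) *
                ((σ k ^ 2 : ℝ) : ℂ) := by ring
            _ = ((N * β : ℝ) : ℂ) * (1 / (N : ℂ)) *
                Complex.exp (-2 * (Real.pi : ℂ) * Complex.I * (k : ℂ) *
                  ((t : ℂ) - (s : ℂ)) / (N : ℂ)) * ((σ k ^ 2 : ℝ) : ℂ) := by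
                rw [hsNβ, hexp, div_mul_div_comm, one_mul, hsN]
            _ = (β : ℂ) * (Complex.exp (-2 * (Real.pi : ℂ) * Complex.I * (k : ℂ) *
                  ((t : ℂ) - (s : ℂ)) / (N : ℂ)) * ((σ k ^ 2 : ℝ) : ℂ)) := by
                push_cast
                field_simp
end
end

section
/- Let N ≥ 1, Lu ≥ 1, Lb ≥ 1 and Ncp ≥ 0 be integers with Ncp ≥ Lu + Lb − 2. Let s : ZMod N → ℂ, hu : ℕ → ℂ, hb : ℕ → ℂ, and let d : ℤ → ℂ be any function satisfying d(m) = s((m − Ncp) mod N) for every integer m with 0 ≤ m ≤ N + Ncp − 1 (no condition on d elsewhere; here (m − Ncp) mod N denotes the reduction of the integer m − Ncp modulo N, viewed in ZMod N). Define y1 : ℤ → ℂ by y1(m) = Σ_{l1=0}^{Lu−1} hu(l1)·d(m − l1) and y2 : ℤ → ℂ by y2(m) = Σ_{l2=0}^{Lb−1} hb(l2)·y1(m − l2). Then for every integer m with Ncp ≤ m ≤ N + Ncp − 1: y2(m) = Σ_{l2=0}^{Lb−1} Σ_{l1=0}^{Lu−1} hb(l2)·hu(l1)·s((m − Ncp −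 l2 − l1) mod N). In other words, a cyclic prefix of length at least Lu + Lb − 2 turns the cascade of the two linear convolutions into the cyclic convolution of s with the cascaded channel taps on the observation window. -/
open Finset

/-- **Cyclic-prefix lemma:** if the cyclic prefix has length `Ncp ≥ Lu + Lb − 2`, then on the
observation window `Ncp ≤ m ≤ N + Ncp − 1` the cascade of the two linear convolutions through
the user-RIS and RIS-BS channels equals the cyclic convolution of the OFDM symbol `s` with the
cascaded channel taps. -/
theorem cyclic_prefix_linear_conv_eq_cyclic_conv
    (N Lu Lb Ncp : ℕ) (hN : 1 ≤ N) (hLu : 1 ≤ Lu) (hLb : 1 ≤ Lb)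
    (hNcp : Lu + Lb - 2 ≤ Ncp)
    (s : ZMod N → ℂ) (hu hb : ℕ → ℂ) (d : ℤ → ℂ)
    (hd : ∀ m : ℤ, 0 ≤ m → m ≤ (N : ℤ) + (Ncp : ℤ) - 1 →
      d m = s (((m - (Ncp : ℤ)) : ℤ) : ZMod N))
    (y1 : ℤ → ℂ) (hy1 : ∀ m : ℤ, y1 m = ∑ l1 ∈ Finset.range Lu, hu l1 * d (m - (l1 : ℤ)))
    (y2 : ℤ → ℂ) (hy2 : ∀ m : ℤ, y2 m = ∑ l2 ∈ Finset.range Lb, hb l2 * y1 (m - (l2 : ℤ))) :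
    ∀ m : ℤ, (Ncp : ℤ) ≤ m → m ≤ (N : ℤ) + (Ncp : ℤ) - 1 →
      y2 m = ∑ l2 ∈ Finset.range Lb, ∑ l1 ∈ Finset.range Lu,
        hb l2 * hu l1 * s (((m - (Ncp : ℤ) - (l2 : ℤ) - (l1 : ℤ)) : ℤ) : ZMod N) := by
  intro m hm1 hm2
  rw [hy2]
  refine Finset.sum_congr rfl fun l2 hl2 => ?_
  rw [hy1, Finset.mul_sum]
  refine Finset.sum_congr rfl fun l1 hl1 => ?_
  have hl1' : (l1 : ℤ) ≤ Lu - 1 := by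
    have := Finset.mem_range.mp hl1; omega
  have hl2' : (l2 : ℤ) ≤ Lb - 1 := by
    have := Finset.mem_range.mp hl2; omega
  have hNcp' : (Lu : ℤ) + Lb - 2 ≤ Ncp := by omega
  rw [hd (m - l2 - l1) (by omega) (by omega)]
  ring_nf
end
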